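/- Let μ be a finite signed Radon measure on ℝⁿ with total variation ‖μ‖ < 1, and fix x₀ with ∫ log⁺(1/|x₀−y|) d|μ|(y) < ∞. Define L̃μ(x) = ∫ log(|x₀−y|/|x−y|) dμ(y). Then for every ball B ⊆ ℝⁿ, ∫_B e^{n·L̃μ(x)} dx < ∞. -/

import Mathlib

open Metric MeasureTheory
open scoped ENNReal

section helpers
open Real

lemma logBound (u v C : ℝ) (hC : 0 ≤ C) (hu : 0 ≤ u) (hv : 0 ≤ v) (huv : u ≤ v + C) :
    Real.log (u / v) ≤ Real.log (1 + C) + max (Real.log (1 / v)) 0 := by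
  have h1C : (1:ℝ) ≤ 1 + C := by linarith
  have hlogC : 0 ≤ Real.log (1 + C) := Real.log_nonneg h1C
  rcases eq_or_lt_of_le hv with hv0 | hvpos
  · rw [← hv0, div_zero, Real.log_zero]
    positivity
  rcases eq_or_lt_of_le hu with hu0 | hupos
  · rw [← hu0, zero_div, Real.log_zero]
    positivity
  rcases le_or_gt 1 v with h1v | hv1
  · have h2 : u / v ≤ 1 + C := by
      rw [div_le_iff₀ hvpos]; nlinarith
    have := Real.log_le_log (div_pos hupos hvpos) h2
    have hmax : (0:ℝ) ≤ max (Real.log (1/v)) 0 := le_max_right _ _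
    linarith
  · have h2 : u / v ≤ (1 + C) * (1 / v) := by
      rw [div_le_iff₀ hvpos, mul_assoc, one_div_mul_cancel hvpos.ne', mul_one]
      linarith
    have h3 := Real.log_le_log (div_pos hupos hvpos) h2
    rw [Real.log_mul (by positivity) (by positivity)] at h3
    have hmax : Real.log (1/v) ≤ max (Real.log (1/v)) 0 := le_max_left _ _
    linarith

lemma expBound (u v C nr : ℝ) (hC : 0 ≤ C) (hu : 0 ≤ u) (hv : 0 ≤ v)
    (huv : u ≤ v + C) {α : ℝ} (hα0 : 0 ≤ α) (hαn : α ≤ nr) :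
    Real.exp (α * Real.log (u / v)) ≤ (1 + C) ^ nr * (1 + v ^ (-α)) := by
  have h1C : (1:ℝ) ≤ 1 + C := by linarith
  have hnr : 0 ≤ nr := hα0.trans hαn
  have hpowC : (1:ℝ) ≤ (1 + C) ^ nr := by
    calc (1:ℝ) = (1+C) ^ (0:ℝ) := by rw [Real.rpow_zero]
    _ ≤ (1+C) ^ nr := Real.rpow_le_rpow_of_exponent_le h1C hnr
  have hvα : (0:ℝ) ≤ v ^ (-α) := Real.rpow_nonneg hv _
  have hRHS1 : (1:ℝ) ≤ (1 + C) ^ nr * (1 + v ^ (-α)) := by nlinarith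
  rcases eq_or_lt_of_le hv with hv0 | hvpos
  · subst hv0; rw [div_zero, Real.log_zero, mul_zero, Real.exp_zero]; exact hRHS1
  rcases eq_or_lt_of_le hu with hu0 | hupos
  · subst hu0; rw [zero_div, Real.log_zero, mul_zero, Real.exp_zero]; exact hRHS1
  have hq : 0 < u / v := div_pos hupos hvpos
  have hrw : Real.exp (α * Real.log (u / v)) = (u / v) ^ α := by
    rw [Real.rpow_def_of_pos hq, mul_comm]
  rw [hrw]
  rcases le_or_gt 1 v with h1v | hv1
  · have h2 : u / v ≤ 1 + C := by rw [div_le_iff₀ hvpos]; nlinarith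
    calc (u/v) ^ α ≤ (1 + C) ^ α := Real.rpow_le_rpow hq.le h2 hα0
    _ ≤ (1 + C) ^ nr := Real.rpow_le_rpow_of_exponent_le h1C hαn
    _ ≤ (1 + C) ^ nr * (1 + v ^ (-α)) := by nlinarith
  · have h2 : u / v ≤ (1 + C) / v := by
      exact (div_le_div_iff_of_pos_right hvpos).2 (by linarith)
    calc (u/v) ^ α ≤ ((1 + C)/v) ^ α := Real.rpow_le_rpow hq.le h2 hα0
    _ = (1 + C) ^ α * v ^ (-α) := by
        rw [Real.div_rpow (by linarith) hv, Real.rpow_neg hv, div_eq_mul_inv]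
    _ ≤ (1 + C) ^ nr * v ^ (-α) :=
        mul_le_mul_of_nonneg_right (Real.rpow_le_rpow_of_exponent_le h1C hαn) hvα
    _ ≤ (1 + C) ^ nr * (1 + v ^ (-α)) := by nlinarith

lemma jensen_aux {X : Type*} [MeasurableSpace X] (ν : Measure X) [IsFiniteMeasure ν] (g : X → ℝ) :
    ENNReal.ofReal (Real.exp (∫ x, g x ∂ν)) ≤
      1 + (ν Set.univ)⁻¹ *
        ∫⁻ x, ENNReal.ofReal (Real.exp ((ν Set.univ).toReal * g x)) ∂ν := by
  rcases eq_or_ne ν 0 with rfl | hν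
  · simp
  haveI : NeZero ν := ⟨hν⟩
  set t : ℝ := (ν Set.univ).toReal with ht
  have htop : ν Set.univ ≠ ⊤ := measure_ne_top ν _
  have ht0 : 0 < t := ENNReal.toReal_pos (by simpa using hν) htop
  by_cases hgi : Integrable g ν
  swap
  · rw [integral_undef hgi, Real.exp_zero, ENNReal.ofReal_one]
    exact le_add_right le_rfl
  have hfm : AEStronglyMeasurable (fun x => Real.exp (t * g x)) ν :=
    (Real.continuous_exp.comp_aestronglyMeasurable (hgi.aestronglyMeasurable.const_mul t))
  by_cases hei : Integrable (fun x => Real.exp (t * g x)) ν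
  swap
  · have hfin : ¬ HasFiniteIntegral (fun x => Real.exp (t * g x)) ν :=
      fun h => hei ⟨hfm, h⟩
    rw [hasFiniteIntegral_iff_ofReal (ae_of_all _ fun x => (Real.exp_pos _).le)] at hfin
    have : ∫⁻ x, ENNReal.ofReal (Real.exp (t * g x)) ∂ν = ⊤ := by
      simpa [not_lt, top_le_iff] using hfin
    rw [this, ENNReal.mul_top (by simp [hν, htop])]
    simp
  have hJ := convexOn_exp.map_average_le Real.continuous_exp.continuousOn isClosed_univ
      (Filter.Eventually.of_forall fun x => Set.mem_univ _) (hgi.const_mul t)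
      (by exact hei) (μ := ν) (f := fun x => t * g x)
  rw [average_eq, average_eq, integral_const_mul, smul_eq_mul, smul_eq_mul, measureReal_def, ← ht,
    ← mul_assoc, inv_mul_cancel₀ ht0.ne', one_mul] at hJ
  have h1 : ENNReal.ofReal (Real.exp (∫ x, g x ∂ν)) ≤
      ENNReal.ofReal (t⁻¹ * ∫ x, Real.exp (t * g x) ∂ν) := ENNReal.ofReal_le_ofReal hJ
  refine h1.trans ?_
  rw [ENNReal.ofReal_mul (by positivity),
    ofReal_integral_eq_lintegral_ofReal hei (ae_of_all _ fun x => (Real.exp_pos _).le),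
    ENNReal.ofReal_inv_of_pos ht0, ht, ENNReal.ofReal_toReal htop]
  exact le_add_left le_rfl

lemma annuli_aux (n : ℕ) (hn : 1 ≤ n) {α : ℝ} (hα0 : 0 ≤ α) (hαn : α < n) :
    ∃ J : ℝ≥0∞, J < ⊤ ∧ ∀ y : EuclideanSpace ℝ (Fin n),
      ∫⁻ x in Metric.ball y 1, ENNReal.ofReal (dist x y ^ (-α)) ≤ J := by
  classical
  haveI : Nontrivial (EuclideanSpace ℝ (Fin n)) := by
    refine ⟨EuclideanSpace.single ⟨0, hn⟩ (1:ℝ), 0, fun h => ?_⟩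
    have := congrArg (fun v => ‖v‖) h
    simp [EuclideanSpace.norm_single] at this
  haveI : NullSingletonClass (volume : Measure (EuclideanSpace ℝ (Fin n))) := inferInstance
  set ρ : ℝ := 1/2 with hρ
  have hρ0 : (0:ℝ) < ρ := by norm_num
  have hρ1 : ρ < 1 := by norm_num
  set β : ℝ := (n : ℝ) - α with hβ
  have hβ0 : 0 < β := by simp only [hβ]; linarith
  set V : ℝ≥0∞ := volume (Metric.ball (0 : EuclideanSpace ℝ (Fin n)) 1) with hV
  have hVlt : V < ⊤ := measure_ball_lt_top
  have key : ∀ k : ℕ, (ρ ^ (k+1)) ^ (-α) * (ρ ^ k) ^ n = ρ ^ (-α) * (ρ ^ β) ^ k := by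
    intro k
    have h1 : ((ρ : ℝ) ^ (k+1)) ^ (-α) = ρ ^ ((((k:ℝ)+1)) * (-α)) := by
      rw [show (((k:ℝ))+1) = (((k+1 : ℕ)):ℝ) by push_cast; ring,
        Real.rpow_natCast ρ (k+1) |>.symm, ← Real.rpow_mul hρ0.le]
    have h2 : ((ρ : ℝ) ^ k) ^ n = ρ ^ ((k:ℝ) * n) := by
      rw [← pow_mul, ← Real.rpow_natCast ρ (k*n)]
      norm_num
    have h3 : ((ρ : ℝ) ^ β) ^ k = ρ ^ (β * k) := by
      rw [← Real.rpow_natCast (ρ ^ β) k, ← Real.rpow_mul hρ0.le]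
    rw [h1, h2, h3, ← Real.rpow_add hρ0, ← Real.rpow_add hρ0]
    congr 1
    simp only [hβ]; push_cast; ring
  refine ⟨ENNReal.ofReal (ρ ^ (-α)) * V * (1 - ENNReal.ofReal (ρ ^ β))⁻¹, ?_, fun y => ?_⟩
  · refine ENNReal.mul_lt_top (ENNReal.mul_lt_top ENNReal.ofReal_lt_top hVlt) ?_
    rw [ENNReal.inv_lt_top]
    refine tsub_pos_of_lt ?_
    rw [ENNReal.ofReal_lt_one]
    exact Real.rpow_lt_one hρ0.le hρ1 hβ0
  have hsub : Metric.ball y 1 ⊆ {y} ∪ ⋃ k : ℕ,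
      (Metric.ball y (ρ ^ k) \ Metric.ball y (ρ ^ (k+1))) := by
    intro x hx
    rcases eq_or_ne x y with rfl | hxy
    · exact Set.mem_union_left _ rfl
    right
    have hd0 : 0 < dist x y := dist_pos.2 hxy
    have hex : ∃ k : ℕ, ρ ^ (k+1) ≤ dist x y := by
      obtain ⟨m, hm⟩ := exists_pow_lt_of_lt_one hd0 hρ1
      exact ⟨m, by
        calc ρ ^ (m+1) = ρ ^ m * ρ := pow_succ ρ m
        _ ≤ ρ ^ m * 1 := by nlinarith [pow_nonneg hρ0.le m]
        _ ≤ dist x y := by rw [mul_one]; exact hm.le⟩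
    set k := Nat.find hex with hk
    refine Set.mem_iUnion.2 ⟨k, ⟨?_, ?_⟩⟩
    · rcases Nat.eq_zero_or_pos k with hk0 | hkpos
      · rw [hk0, pow_zero]; exact mem_ball.2 (by simpa using hx)
      · obtain ⟨j, hj⟩ := Nat.exists_eq_add_of_lt hkpos
        have hmin := Nat.find_min hex (show j < k by omega)
        push_neg at hmin
        rw [mem_ball, show k = j + 1 by omega]
        exact hmin
    · intro hmem
      exact absurd (Nat.find_spec hex) (by simpa [mem_ball] using not_le.2 (mem_ball.1 hmem))
  calc ∫⁻ x in Metric.ball y 1, ENNReal.ofReal (dist x y ^ (-α))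
      ≤ ∫⁻ x in ({y} ∪ ⋃ k : ℕ, (Metric.ball y (ρ ^ k) \ Metric.ball y (ρ ^ (k+1)))),
        ENNReal.ofReal (dist x y ^ (-α)) := lintegral_mono_set hsub
    _ ≤ (∫⁻ x in ({y} : Set _), ENNReal.ofReal (dist x y ^ (-α)))
        + ∫⁻ x in (⋃ k : ℕ, (Metric.ball y (ρ ^ k) \ Metric.ball y (ρ ^ (k+1)))),
          ENNReal.ofReal (dist x y ^ (-α)) := lintegral_union_le _ _ _
    _ ≤ 0 + ∑' k : ℕ, ∫⁻ x in (Metric.ball y (ρ ^ k) \ Metric.ball y (ρ ^ (k+1))),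
          ENNReal.ofReal (dist x y ^ (-α)) := by
        refine add_le_add ?_ (lintegral_iUnion_le _ _)
        rw [Measure.restrict_eq_zero.2 (measure_singleton y)]
        simp
    _ = ∑' k : ℕ, ∫⁻ x in (Metric.ball y (ρ ^ k) \ Metric.ball y (ρ ^ (k+1))),
          ENNReal.ofReal (dist x y ^ (-α)) := by rw [zero_add]
    _ ≤ ∑' k : ℕ, ENNReal.ofReal (ρ ^ (-α)) * (ENNReal.ofReal (ρ ^ β)) ^ k * V := by
        refine ENNReal.tsum_le_tsum fun k => ?_
        have hρk1 : (0:ℝ) < ρ ^ (k+1) := pow_pos hρ0 _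
        calc ∫⁻ x in (Metric.ball y (ρ ^ k) \ Metric.ball y (ρ ^ (k+1))),
              ENNReal.ofReal (dist x y ^ (-α))
            ≤ ∫⁻ _x in (Metric.ball y (ρ ^ k) \ Metric.ball y (ρ ^ (k+1))),
              ENNReal.ofReal ((ρ ^ (k+1)) ^ (-α)) := by
              refine setLIntegral_mono measurable_const fun x hx => ?_
              refine ENNReal.ofReal_le_ofReal ?_
              refine Real.rpow_le_rpow_of_nonpos hρk1 ?_ (neg_nonpos.2 hα0)
              have := hx.2
              rw [mem_ball, not_lt] at this
              exact this
          _ = ENNReal.ofReal ((ρ ^ (k+1)) ^ (-α)) *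
              volume (Metric.ball y (ρ ^ k) \ Metric.ball y (ρ ^ (k+1))) := by
              rw [setLIntegral_const]
          _ ≤ ENNReal.ofReal ((ρ ^ (k+1)) ^ (-α)) * volume (Metric.ball y (ρ ^ k)) := by
              exact mul_le_mul_right (measure_mono Set.diff_subset) _
          _ = ENNReal.ofReal ((ρ ^ (k+1)) ^ (-α)) * (ENNReal.ofReal ((ρ ^ k) ^ n) * V) := by
              rw [Measure.addHaar_ball volume y (pow_pos hρ0 k).le, finrank_euclideanSpace_fin]
          _ = ENNReal.ofReal (ρ ^ (-α)) * (ENNReal.ofReal (ρ ^ β)) ^ k * V := by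
              rw [← mul_assoc, ← ENNReal.ofReal_mul (Real.rpow_nonneg hρk1.le _), key k,
                ENNReal.ofReal_mul (Real.rpow_nonneg hρ0.le _),
                ENNReal.ofReal_pow (Real.rpow_nonneg hρ0.le _)]
    _ = ENNReal.ofReal (ρ ^ (-α)) * V * (1 - ENNReal.ofReal (ρ ^ β))⁻¹ := by
        rw [ENNReal.tsum_mul_right]
        rw [ENNReal.tsum_mul_left, ENNReal.tsum_geometric]
        ring

end helpers

/-- Let `μ = μp − μm` be a finite signed Radon measure on `ℝⁿ` with total variation
`‖μ‖ < 1`, and fix `x₀` with `∫ log⁺(1/|x₀−y|) d|μ|(y) < ∞`.  With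
`L̃μ(x) = ∫ log(|x₀−y|/|x−y|) dμ(y)`, for every ball `B ⊆ ℝⁿ` one has
`∫_B e^{n L̃μ} < ∞`. -/
theorem stmt4 (n : ℕ) (hn : 1 ≤ n)
    (μp μm : Measure (EuclideanSpace ℝ (Fin n)))
    [IsFiniteMeasure μp] [IsFiniteMeasure μm]
    (hmass : μp Set.univ + μm Set.univ < 1)
    (x₀ : EuclideanSpace ℝ (Fin n))
    (hx₀ : ∫⁻ y, ENNReal.ofReal (max (Real.log (1 / ‖x₀ - y‖)) 0) ∂(μp + μm) < ⊤)
    (L : EuclideanSpace ℝ (Fin n) → ℝ)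
    (hL : ∀ x, L x = (∫ y, Real.log (‖x₀ - y‖ / ‖x - y‖) ∂μp)
        - ∫ y, Real.log (‖x₀ - y‖ / ‖x - y‖) ∂μm) :
    ∀ (z : EuclideanSpace ℝ (Fin n)) (r : ℝ),
      ∫⁻ x in Metric.ball z r, ENNReal.ofReal (Real.exp ((n : ℝ) * L x)) < ⊤ := by
  intro z r
  set g : EuclideanSpace ℝ (Fin n) → EuclideanSpace ℝ (Fin n) → ℝ := fun x y => Real.log (‖x₀ - y‖ / ‖x - y‖) with hgdef
  -- constants
  set C₁ : ℝ := ‖z - x₀‖ + |r| with hC₁def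
  have hC₁0 : 0 ≤ C₁ := by positivity
  have hxball : ∀ x ∈ Metric.ball z r, ‖x - x₀‖ ≤ C₁ := by
    intro x hx
    have h1 : dist x x₀ ≤ dist x z + dist z x₀ := dist_triangle x z x₀
    have h2 : dist x z < r := mem_ball.1 hx
    have h3 : r ≤ |r| := le_abs_self r
    simp only [dist_eq_norm] at h1 h2
    rw [hC₁def]
    linarith
  -- the μm side
  set Λm : ℝ≥0∞ := ∫⁻ y, ENNReal.ofReal (max (Real.log (1 / ‖x₀ - y‖)) 0) ∂μm with hΛmdef
  have hΛmlt : Λm < ⊤ := by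
    refine lt_of_le_of_lt ?_ hx₀
    rw [lintegral_add_measure]
    exact le_add_self
  have hlog1C : 0 ≤ Real.log (1 + C₁) := Real.log_nonneg (by linarith)
  set K : ℝ := (μm Set.univ).toReal * Real.log (1 + C₁) + Λm.toReal with hKdef
  have hK0 : 0 ≤ K := by
    have := ENNReal.toReal_nonneg (a := μm Set.univ)
    have := ENNReal.toReal_nonneg (a := Λm)
    rw [hKdef]; positivity
  have hmaxmeas : Measurable (fun y : EuclideanSpace ℝ (Fin n) => max (Real.log (1 / ‖x₀ - y‖)) 0) :=
    ((Real.measurable_log.comp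
      (measurable_const.div ((measurable_const.sub measurable_id).norm))).max measurable_const)
  have hmaxint : Integrable (fun y : EuclideanSpace ℝ (Fin n) => max (Real.log (1 / ‖x₀ - y‖)) 0) μm := by
    refine ⟨hmaxmeas.aestronglyMeasurable,
      (hasFiniteIntegral_iff_ofReal (ae_of_all _ fun y => le_max_right _ _)).2 ?_⟩
    exact hΛmlt
  have hA : ∀ x : EuclideanSpace ℝ (Fin n), ‖x - x₀‖ ≤ C₁ → -(∫ y, g x y ∂μm) ≤ K := by
    intro x hx
    by_cases hgi : Integrable (fun y => g x y) μm
    · rw [← integral_neg]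
      have hpt : ∀ y : EuclideanSpace ℝ (Fin n), -g x y ≤ Real.log (1 + C₁) + max (Real.log (1 / ‖x₀ - y‖)) 0 := by
        intro y
        have hng : -g x y = Real.log (‖x - y‖ / ‖x₀ - y‖) := by
          simp only [hgdef, ← Real.log_inv, inv_div]
        rw [hng]
        refine logBound _ _ _ hC₁0 (norm_nonneg _) (norm_nonneg _) ?_
        have h1 : dist x y ≤ dist x x₀ + dist x₀ y := dist_triangle x x₀ y
        simp only [dist_eq_norm] at h1
        linarith
      have hbint : Integrable
          (fun y : EuclideanSpace ℝ (Fin n) => Real.log (1 + C₁) + max (Real.log (1 / ‖x₀ - y‖)) 0) μm :=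
        (integrable_const _).add hmaxint
      have hmono := integral_mono hgi.neg hbint hpt
      rw [integral_add (integrable_const _) hmaxint, integral_const] at hmono
      have hmval : ∫ y, max (Real.log (1 / ‖x₀ - y‖)) 0 ∂μm = Λm.toReal := by
        have h2 := ofReal_integral_eq_lintegral_ofReal hmaxint
          (ae_of_all _ fun y => le_max_right _ _)
        calc ∫ y, max (Real.log (1 / ‖x₀ - y‖)) 0 ∂μm
            = (ENNReal.ofReal (∫ y, max (Real.log (1 / ‖x₀ - y‖)) 0 ∂μm)).toReal :=
            (ENNReal.toReal_ofReal (integral_nonneg fun y => le_max_right _ _)).symm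
          _ = Λm.toReal := by rw [h2]
      rw [hmval, smul_eq_mul] at hmono
      rw [hKdef]
      exact hmono
    · rw [integral_undef hgi, neg_zero]; exact hK0
  -- the μp side
  set t : ℝ := (μp Set.univ).toReal with htdef
  have htop : μp Set.univ ≠ ⊤ := measure_ne_top _ _
  have ht1 : t < 1 := by
    have h2 : μp Set.univ < 1 := lt_of_le_of_lt le_self_add hmass
    rw [htdef, show (1:ℝ) = (1:ℝ≥0∞).toReal by simp]
    exact ENNReal.toReal_lt_toReal htop (by simp) |>.2 h2
  have ht0 : 0 ≤ t := ENNReal.toReal_nonneg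
  set α : ℝ := t * n with hαdef
  have hα0 : 0 ≤ α := by positivity
  have hncast : (0:ℝ) < n := by exact_mod_cast hn
  have hαn : α < n := by
    rw [hαdef]; nlinarith
  have hαlen : α ≤ (n:ℝ) := hαn.le
  obtain ⟨J, hJlt, hJ⟩ := annuli_aux n hn hα0 hαn
  set B := Metric.ball z r with hBdef
  set M : ℝ≥0∞ := ENNReal.ofReal ((1 + C₁) ^ (n:ℝ)) * (volume B + (volume B + J)) with hMdef
  have hvolB : volume B < ⊤ := measure_ball_lt_top
  have hMlt : M < ⊤ := by
    refine ENNReal.mul_lt_top ENNReal.ofReal_lt_top ?_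
    exact ENNReal.add_lt_top.2 ⟨hvolB, ENNReal.add_lt_top.2 ⟨hvolB, hJlt⟩⟩
  set F : EuclideanSpace ℝ (Fin n) → EuclideanSpace ℝ (Fin n) → ℝ≥0∞ := fun x y => ENNReal.ofReal (Real.exp (α * g x y)) with hFdef
  have hFmeas : Measurable (Function.uncurry F) := by
    apply ENNReal.measurable_ofReal.comp
    apply Real.measurable_exp.comp
    apply measurable_const.mul
    apply Real.measurable_log.comp
    exact ((continuous_const.sub continuous_snd).norm.measurable.div
      ((continuous_fst.sub continuous_snd).norm.measurable))
  have hPmeas : Measurable fun x : EuclideanSpace ℝ (Fin n) => ∫⁻ y, F x y ∂μp :=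
    Measurable.lintegral_prod_right hFmeas
  -- uniform inner bound
  have hInner : ∀ y : EuclideanSpace ℝ (Fin n), ∫⁻ x in B, F x y ≤ M := by
    intro y
    have hptx : ∀ x ∈ B, F x y ≤ ENNReal.ofReal ((1 + C₁) ^ (n:ℝ)) *
        (1 + ENNReal.ofReal (dist x y ^ (-α))) := by
      intro x hx
      have hxx₀ := hxball x hx
      have h1 : Real.exp (α * g x y) ≤ (1 + C₁) ^ (n:ℝ) * (1 + ‖x - y‖ ^ (-α)) := by
        refine expBound _ _ _ _ hC₁0 (norm_nonneg _) (norm_nonneg _) ?_ hα0 hαlen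
        have h2 : dist x₀ y ≤ dist x₀ x + dist x y := dist_triangle x₀ x y
        have h3 : ‖x₀ - x‖ = ‖x - x₀‖ := norm_sub_rev _ _
        simp only [dist_eq_norm] at h2
        linarith
      calc F x y ≤ ENNReal.ofReal ((1 + C₁) ^ (n:ℝ) * (1 + ‖x - y‖ ^ (-α))) :=
            ENNReal.ofReal_le_ofReal h1
      _ = ENNReal.ofReal ((1 + C₁) ^ (n:ℝ)) * (1 + ENNReal.ofReal (dist x y ^ (-α))) := by
          rw [ENNReal.ofReal_mul (Real.rpow_nonneg (by linarith) _),
            ENNReal.ofReal_add zero_le_one (Real.rpow_nonneg (norm_nonneg _) _),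
            ENNReal.ofReal_one, dist_eq_norm]
    have hmono1 : ∫⁻ x in B, F x y ≤ ∫⁻ x in B, ENNReal.ofReal ((1 + C₁) ^ (n:ℝ)) *
        (1 + ENNReal.ofReal (dist x y ^ (-α))) := by
      refine lintegral_mono_ae ?_
      exact (ae_restrict_iff' measurableSet_ball).2 (ae_of_all _ hptx)
    refine hmono1.trans ?_
    rw [lintegral_const_mul' _ _ ENNReal.ofReal_ne_top]
    rw [hMdef]
    refine mul_le_mul_right ?_ _
    rw [lintegral_add_left measurable_const, setLIntegral_one]
    refine add_le_add_right ?_ _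
    have hsplit : ∀ x : EuclideanSpace ℝ (Fin n), ENNReal.ofReal (dist x y ^ (-α)) ≤
        1 + (Metric.ball y 1).indicator (fun x => ENNReal.ofReal (dist x y ^ (-α))) x := by
      intro x
      by_cases hxy1 : x ∈ Metric.ball y 1
      · rw [Set.indicator_of_mem hxy1]
        exact le_add_self
      · rw [Set.indicator_of_notMem hxy1, add_zero]
        have h1 : (1:ℝ) ≤ dist x y := by
          rw [mem_ball, not_lt] at hxy1; exact hxy1
        calc ENNReal.ofReal (dist x y ^ (-α)) ≤ ENNReal.ofReal 1 :=
              ENNReal.ofReal_le_ofReal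
                (Real.rpow_le_one_of_one_le_of_nonpos h1 (neg_nonpos.2 hα0))
        _ = 1 := ENNReal.ofReal_one
    calc ∫⁻ x in B, ENNReal.ofReal (dist x y ^ (-α))
        ≤ ∫⁻ x in B, (1 + (Metric.ball y 1).indicator
            (fun x => ENNReal.ofReal (dist x y ^ (-α))) x) := lintegral_mono hsplit
      _ = volume B + ∫⁻ x in B, (Metric.ball y 1).indicator
            (fun x => ENNReal.ofReal (dist x y ^ (-α))) x := by
          rw [lintegral_add_left measurable_const, setLIntegral_one]
      _ ≤ volume B + ∫⁻ x, (Metric.ball y 1).indicator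
            (fun x => ENNReal.ofReal (dist x y ^ (-α))) x := by
          exact add_le_add_right (setLIntegral_le_lintegral _ _) _
      _ = volume B + ∫⁻ x in Metric.ball y 1, ENNReal.ofReal (dist x y ^ (-α)) := by
          rw [lintegral_indicator measurableSet_ball]
      _ ≤ volume B + J := add_le_add_right (hJ y) _
  -- pointwise master bound
  have hmaster : ∀ x ∈ B, ENNReal.ofReal (Real.exp ((n:ℝ) * L x)) ≤
      ENNReal.ofReal (Real.exp ((n:ℝ) * K)) *
        (1 + (μp Set.univ)⁻¹ * ∫⁻ y, F x y ∂μp) := by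
    intro x hx
    have hAx := hA x (hxball x hx)
    have h1 : (n:ℝ) * L x ≤ (n:ℝ) * K + (n:ℝ) * (∫ y, g x y ∂μp) := by
      rw [hL x]
      have : ∫ y, Real.log (‖x₀ - y‖ / ‖x - y‖) ∂μp = ∫ y, g x y ∂μp := rfl
      rw [this]
      have : ∫ y, Real.log (‖x₀ - y‖ / ‖x - y‖) ∂μm = ∫ y, g x y ∂μm := rfl
      rw [this]
      nlinarith [hAx, hncast.le]
    have h2 : Real.exp ((n:ℝ) * L x) ≤
        Real.exp ((n:ℝ) * K) * Real.exp ((n:ℝ) * ∫ y, g x y ∂μp) := by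
      rw [← Real.exp_add]
      exact Real.exp_le_exp.2 h1
    calc ENNReal.ofReal (Real.exp ((n:ℝ) * L x))
        ≤ ENNReal.ofReal (Real.exp ((n:ℝ) * K) * Real.exp ((n:ℝ) * ∫ y, g x y ∂μp)) :=
          ENNReal.ofReal_le_ofReal h2
      _ = ENNReal.ofReal (Real.exp ((n:ℝ) * K)) *
          ENNReal.ofReal (Real.exp ((n:ℝ) * ∫ y, g x y ∂μp)) :=
          ENNReal.ofReal_mul (Real.exp_pos _).le
      _ ≤ ENNReal.ofReal (Real.exp ((n:ℝ) * K)) *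
          (1 + (μp Set.univ)⁻¹ * ∫⁻ y, F x y ∂μp) := by
          refine mul_le_mul_right ?_ _
          have hj := jensen_aux μp (fun y => (n:ℝ) * g x y)
          rw [integral_const_mul] at hj
          have hEq : (fun y : EuclideanSpace ℝ (Fin n) => ENNReal.ofReal (Real.exp ((μp Set.univ).toReal *
              ((n:ℝ) * g x y)))) = fun y => F x y := by
            funext y
            simp only [hFdef]
            congr 1
            simp only [hαdef, htdef]
            ring
          rw [hEq] at hj
          exact hj
  -- assembly
  have hswap : ∫⁻ x in B, ∫⁻ y, F x y ∂μp ∂volume = ∫⁻ y, ∫⁻ x in B, F x y ∂volume ∂μp :=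
    lintegral_lintegral_swap hFmeas.aemeasurable
  have hc1 : (μp Set.univ)⁻¹ * μp Set.univ ≤ 1 := by
    rcases eq_or_ne (μp Set.univ) 0 with h0 | h0
    · simp [h0]
    · rw [ENNReal.inv_mul_cancel h0 htop]
  calc ∫⁻ x in B, ENNReal.ofReal (Real.exp ((n:ℝ) * L x))
      ≤ ∫⁻ x in B, ENNReal.ofReal (Real.exp ((n:ℝ) * K)) *
          (1 + (μp Set.univ)⁻¹ * ∫⁻ y, F x y ∂μp) := by
        refine lintegral_mono_ae ?_
        exact (ae_restrict_iff' measurableSet_ball).2 (ae_of_all _ hmaster)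
    _ = ENNReal.ofReal (Real.exp ((n:ℝ) * K)) *
        ∫⁻ x in B, (1 + (μp Set.univ)⁻¹ * ∫⁻ y, F x y ∂μp) :=
        lintegral_const_mul' _ _ ENNReal.ofReal_ne_top
    _ = ENNReal.ofReal (Real.exp ((n:ℝ) * K)) *
        (volume B + ∫⁻ x in B, (μp Set.univ)⁻¹ * ∫⁻ y, F x y ∂μp) := by
        rw [lintegral_add_left measurable_const, setLIntegral_one]
    _ = ENNReal.ofReal (Real.exp ((n:ℝ) * K)) *
        (volume B + (μp Set.univ)⁻¹ * ∫⁻ x in B, ∫⁻ y, F x y ∂μp) := by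
        rw [lintegral_const_mul _ hPmeas]
    _ ≤ ENNReal.ofReal (Real.exp ((n:ℝ) * K)) * (volume B + M) := by
        refine mul_le_mul_right (add_le_add_right ?_ _) _
        rw [hswap]
        calc (μp Set.univ)⁻¹ * ∫⁻ y, ∫⁻ x in B, F x y ∂volume ∂μp
            ≤ (μp Set.univ)⁻¹ * ∫⁻ _y, M ∂μp :=
            mul_le_mul_right (lintegral_mono hInner) _
          _ = (μp Set.univ)⁻¹ * (M * μp Set.univ) := by rw [lintegral_const]
          _ = M * ((μp Set.univ)⁻¹ * μp Set.univ) := by ring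
          _ ≤ M * 1 := mul_le_mul_right hc1 _
          _ = M := mul_one _
    _ < ⊤ := ENNReal.mul_lt_top ENNReal.ofReal_lt_top (ENNReal.add_lt_top.2 ⟨hvolB, hMlt⟩)
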